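/- Let A be an irreducible tridiagonal (d+1)×(d+1) matrix over a field K with superdiagonal entries b_0,...,b_{d-1} and subdiagonal entries c_1,...,c_d satisfying b_{i-1}c_i ≠ 0, and let A* be the diagonal matrix with distinct diagonal entries θ*_0,...,θ*_d. If d is odd, then det(AA* - A*A) = ∏_{1 ≤ i ≤ d, i odd} b_{i-1} c_i (θ*_{i-1} - θ*_i)^2; in particular AA* - A*A is invertible. -/

import Mathlib

open Matrix Finset

lemma aux1 {K : Type*} [CommRing K] : ∀ (m : ℕ) (u v : ℕ → K)
    (M : Matrix (Fin (2*m)) (Fin (2*m)) K),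
    (∀ i j : Fin (2*m), (i:ℕ)+1 = (j:ℕ) → M i j = u i) →
    (∀ i j : Fin (2*m), (i:ℕ) = (j:ℕ)+1 → M i j = v i) →
    (∀ i j : Fin (2*m), (i:ℕ) = (j:ℕ) ∨ (i:ℕ)+1 < (j:ℕ) ∨ (j:ℕ)+1 < (i:ℕ) → M i j = 0) →
    M.det = ∏ k ∈ Finset.range m, (-(u (2*k) * v (2*k+1))) := by
  intro m
  induction m with
  | zero => intro u v M _ _ _; simp [Matrix.det_isEmpty]
  | succ m ih =>
    intro u v M hu hv hz
    rw [Matrix.det_succ_row_zero, Finset.sum_eq_single_of_mem 1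
      (Finset.mem_univ _) ?other]
    case other =>
      intro j _ hj
      have hj' : (j:ℕ) ≠ 1 := fun h => hj (Fin.ext (by simp [h, Fin.val_one]))
      have : M 0 j = 0 := by apply hz; simp; omega
      simp [this]
    have h01 : M 0 1 = u 0 := by apply hu; simp [Fin.val_one]; rw [Nat.mod_eq_of_lt (by omega)]
    set B := M.submatrix Fin.succ (Fin.succAbove 1) with hB
    rw [Matrix.det_succ_column_zero, Finset.sum_eq_single_of_mem 0
      (Finset.mem_univ _) ?other2]
    case other2 =>
      intro i _ hi
      have hi' : (i:ℕ) ≠ 0 := fun h => hi (Fin.ext (by simp [h]))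
      have hB0 : B i 0 = 0 := by
        rw [hB]
        simp only [Matrix.submatrix_apply]
        apply hz
        right; right
        rw [Fin.succAbove_ne_zero_zero (fun h => by
          have h' := congrArg Fin.val h
          simp only [Fin.val_zero] at h'
          rw [Fin.val_one', Nat.mod_eq_of_lt (by omega)] at h'
          omega)]
        simp
        rw [Fin.lt_def]; simpa using Nat.pos_of_ne_zero hi'
      simp [hB0]
    have hB00 : B 0 0 = v 1 := by
      rw [hB]
      simp only [Matrix.submatrix_apply]
      apply hv
      simp [Fin.succAbove, Fin.lt_def]
      rw [Nat.mod_eq_of_lt (by omega)]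
    have hC : B.submatrix (Fin.succAbove 0) Fin.succ
        = M.submatrix (fun i : Fin (2*m) => (⟨(i:ℕ)+2, by omega⟩ : Fin (2*(m+1))))
            (fun j : Fin (2*m) => (⟨(j:ℕ)+2, by omega⟩ : Fin (2*(m+1)))) := by
      ext i j
      rw [hB]
      simp only [Matrix.submatrix_apply, Fin.succAbove_zero]
      congr 1
      all_goals apply Fin.ext
      all_goals simp [Fin.succAbove, Fin.lt_def]
    rw [hC]
    rw [ih (fun i => u (i+2)) (fun i => v (i+2)) _ ?hu' ?hv' ?hz']
    case hu' => intro i j h; simp only [Matrix.submatrix_apply]; rw [hu]; simp; omega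
    case hv' => intro i j h; simp only [Matrix.submatrix_apply]; rw [hv]; simp; omega
    case hz' => intro i j h; simp only [Matrix.submatrix_apply]; apply hz; simp; omega
    rw [Finset.prod_range_succ']
    rw [h01, hB00]
    have hprod : (∏ x ∈ Finset.range m, -(u (2*x+2) * v (2*x+1+2)))
        = ∏ x ∈ Finset.range m, -(u (2*(x+1)) * v (2*(x+1)+1)) := by
      apply Finset.prod_congr rfl
      intro k _
      have e1 : 2*k+2 = 2*(k+1) := by ring
      have e2 : 2*k+1+2 = 2*(k+1)+1 := by ring
      rw [e1, e2]
    rw [hprod]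
    simp only [Fin.val_zero, Fin.val_one, pow_zero, pow_one, one_mul]
    ring

lemma aux2 {K : Type*} [CommRing K] (m : ℕ) (f : ℕ → K) :
    ∏ i ∈ (Finset.range (2*m)).filter (fun i => Odd i), f i
      = ∏ k ∈ Finset.range m, f (2*k+1) := by
  induction m with
  | zero => simp
  | succ m ih =>
    have h2 : 2*(m+1) = (2*m+1)+1 := by ring
    rw [h2, Finset.range_add_one, Finset.filter_insert, Finset.range_add_one, Finset.filter_insert,
      Finset.prod_range_succ]
    have ho : Odd (2*m+1) := ⟨m, by ring⟩
    have he : ¬ Odd (2*m) := by simp [Nat.odd_iff]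
    simp only [if_pos ho, if_neg he]
    rw [Finset.prod_insert (by simp [Nat.odd_iff]), ih]
    ring

/-- determinant of the commutator A A* - A* A for d odd. -/
theorem stmt3 {d : ℕ} {K : Type*} [Field K]
    (b c θ : ℕ → K) (A : Matrix (Fin (d+1)) (Fin (d+1)) K)
    (hsup : ∀ i j : Fin (d+1), (i : ℕ) + 1 = (j : ℕ) → A i j = b i)
    (hsub : ∀ i j : Fin (d+1), (i : ℕ) = (j : ℕ) + 1 → A i j = c i)
    (hzero : ∀ i j : Fin (d+1), (i : ℕ) + 1 < (j : ℕ) ∨ (j : ℕ) + 1 < (i : ℕ) → A i j = 0)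
    (hbc : ∀ i : ℕ, 1 ≤ i → i ≤ d → b (i-1) * c i ≠ 0)
    (hθ : ∀ i j : ℕ, i ≤ d → j ≤ d → θ i = θ j → i = j)
    (hd : Odd d)
    (As : Matrix (Fin (d+1)) (Fin (d+1)) K)
    (hAs : As = Matrix.diagonal (fun i : Fin (d+1) => θ (i : ℕ))) :
    (A * As - As * A).det =
      ∏ i ∈ (Finset.range (d+1)).filter (fun i => Odd i),
        b (i-1) * c i * (θ (i-1) - θ i)^2 ∧
    IsUnit (A * As - As * A) := by
  subst hAs
  set M := A * Matrix.diagonal (fun i : Fin (d+1) => θ (i : ℕ))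
    - Matrix.diagonal (fun i : Fin (d+1) => θ (i : ℕ)) * A with hMdef
  have hM : ∀ i j : Fin (d+1), M i j = A i j * (θ (j:ℕ) - θ (i:ℕ)) := by
    intro i j
    simp only [hMdef, Matrix.sub_apply, Matrix.mul_diagonal, Matrix.diagonal_mul]
    ring
  have hdet : M.det = ∏ i ∈ (Finset.range (d+1)).filter (fun i => Odd i),
      b (i-1) * c i * (θ (i-1) - θ i)^2 := by
    obtain ⟨k, hk⟩ := hd
    subst hk
    have key := aux1 (k+1) (fun i => b i * (θ (i+1) - θ i))
        (fun i => c i * (θ (i-1) - θ i)) M ?hu ?hv ?hz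
    case hu =>
      intro i j hij
      rw [hM, hsup i j hij, ← hij]
    case hv =>
      intro i j hij
      rw [hM, hsub i j hij]
      have : (j:ℕ) = (i:ℕ) - 1 := by omega
      rw [this]
    case hz =>
      intro i j hij
      rcases hij with h | h | h
      · rw [hM]
        have : (i:ℕ) = (j:ℕ) := h
        rw [this]
        ring
      · rw [hM, hzero i j (Or.inl h)]; ring
      · rw [hM, hzero i j (Or.inr h)]; ring
    refine key.trans ?_
    have h2 : 2*k+1+1 = 2*(k+1) := by ring
    rw [h2, aux2 (k+1) (fun i => b (i-1) * c i * (θ (i-1) - θ i)^2)]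
    apply Finset.prod_congr rfl
    intro x _
    have e1 : 2*x+1-1 = 2*x := by omega
    simp only [e1]
    ring
  refine ⟨hdet, ?_⟩
  rw [Matrix.isUnit_iff_isUnit_det, hdet, isUnit_iff_ne_zero]
  apply Finset.prod_ne_zero_iff.mpr
  intro i hi
  simp only [Finset.mem_filter, Finset.mem_range] at hi
  obtain ⟨hilt, hiodd⟩ := hi
  have hi1 : 1 ≤ i := hiodd.pos
  apply mul_ne_zero (hbc i hi1 (by omega))
  apply pow_ne_zero
  apply sub_ne_zero.mpr
  intro h
  have := hθ (i-1) i (by omega) (by omega) h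
  omega
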